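/- arXiv:math/0612348 — 2 statements merged into one kernel-verified Lean document; each statement's English description precedes it below -/
import Mathlib

section
/- For the divisor function d, ∑_{m≥1} d(mv)/m^s = ζ(s)² d(v) B_v(s) for Re(s) > 1, where B_v(s) = ∏_{p^α||v} (1 - α/((α+1)p^s)). -/
open Finset

namespace DivisorShiftedAux

open ArithmeticFunction Complex
open scoped ArithmeticFunction.Moebius ArithmeticFunction.sigma ArithmeticFunction.zeta

/-- The local weight `α/(α+1)` where `α = v_p(v)`. -/
noncomputable def w (v p : ℕ) : ℂ :=
  (v.factorization p : ℂ) / ((v.factorization p : ℂ) + 1)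

/-- The finitely supported correction factor. -/
noncomputable def c (v : ℕ) : ArithmeticFunction ℂ :=
  pmul ((μ : ArithmeticFunction ℤ) : ArithmeticFunction ℂ) (prodPrimeFactors (w v))

lemma c_mult (v : ℕ) : (c v).IsMultiplicative :=
  isMultiplicative_moebius.intCast.pmul (IsMultiplicative.prodPrimeFactors _)

lemma c_apply_prime (v : ℕ) {p : ℕ} (hp : p.Prime) : c v p = - w v p := by
  rw [c, pmul_apply, intCoe_apply, moebius_apply_prime hp,
    prodPrimeFactors_apply hp.ne_zero, hp.primeFactors, Finset.prod_singleton]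
  push_cast
  ring

lemma c_apply_prime_pow (v : ℕ) {p k : ℕ} (hp : p.Prime) (hk : 2 ≤ k) :
    c v (p ^ k) = 0 := by
  rw [c, pmul_apply, intCoe_apply, moebius_apply_prime_pow hp (by omega),
    if_neg (by omega)]
  simp

lemma c_one (v : ℕ) : c v 1 = 1 := (c_mult v).map_one

lemma c_eq_zero_of_not_mem_divisors (v : ℕ) (hv : v ≠ 0) {n : ℕ}
    (hn : n ∉ v.divisors) : c v n = 0 := by
  rcases eq_or_ne n 0 with rfl | hn0
  · exact ArithmeticFunction.map_zero
  have hnd : ¬ n ∣ v := fun h => hn (Nat.mem_divisors.mpr ⟨h, hv⟩)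
  by_cases hsq : Squarefree n
  · by_cases hden : ∃ p ∈ n.primeFactors, v.factorization p = 0
    · obtain ⟨p, hpmem, hp0⟩ := hden
      rw [c, pmul_apply, prodPrimeFactors_apply hn0,
        Finset.prod_eq_zero hpmem (by rw [w, hp0]; simp), mul_zero]
    · push_neg at hden
      exfalso
      apply hnd
      have hdvd : ∀ p ∈ n.primeFactors, p ∣ v := fun p hp =>
        Nat.dvd_of_factorization_pos (hden p hp)
      calc n = ∏ p ∈ n.primeFactors, p := (Nat.prod_primeFactors_of_squarefree hsq).symm
        _ ∣ v := Finset.prod_primes_dvd v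
            (fun p hp => (Nat.prime_of_mem_primeFactors hp).prime) hdvd
  · rw [c, pmul_apply, intCoe_apply, moebius_eq_zero_of_not_squarefree hsq]
    simp

/-- The normalized shifted divisor function `m ↦ d(mv)/d(v)`. -/
noncomputable def fv (v : ℕ) : ArithmeticFunction ℂ :=
  ⟨fun m => (((m * v).divisors.card : ℕ) : ℂ) / ((v.divisors.card : ℕ) : ℂ), by simp⟩

@[simp] lemma fv_apply (v m : ℕ) :
    fv v m = (((m * v).divisors.card : ℕ) : ℂ) / ((v.divisors.card : ℕ) : ℂ) := rfl

lemma dcast_ne (v : ℕ) (hv : v ≠ 0) : ((v.divisors.card : ℕ) : ℂ) ≠ 0 :=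
  Nat.cast_ne_zero.mpr (Finset.card_ne_zero_of_mem (Nat.mem_divisors_self v hv))

/-- Key numeric identity: `d(mv) d(nv) = d(mnv) d(v)` for coprime `m n`. -/
lemma d_mul_d (v : ℕ) (hv : v ≠ 0) {m n : ℕ} (hm : m ≠ 0) (hn : n ≠ 0)
    (hmn : m.Coprime n) :
    (m * v).divisors.card * (n * v).divisors.card
      = (m * n * v).divisors.card * v.divisors.card := by
  have hM : m * n * v ≠ 0 := by positivity
  have key : ∀ x : ℕ, x ≠ 0 → x ∣ m * n * v →
      x.divisors.card = ∏ p ∈ (m * n * v).primeFactors, (x.factorization p + 1) := by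
    intro x hx hdvd
    rw [Nat.card_divisors hx]
    refine Finset.prod_subset (Nat.primeFactors_mono hdvd hM) fun p _ hp => ?_
    have h0 : x.factorization p = 0 := by
      rwa [← Finsupp.notMem_support_iff, Nat.support_factorization]
    simp [h0]
  rw [key _ (by positivity) ⟨n, by ring⟩, key _ (by positivity) ⟨m, by ring⟩,
    key _ hM dvd_rfl, key _ hv ⟨m * n, by ring⟩, ← Finset.prod_mul_distrib,
    ← Finset.prod_mul_distrib]
  refine Finset.prod_congr rfl fun p _ => ?_
  rw [Nat.factorization_mul hm hv, Nat.factorization_mul hn hv,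
    Nat.factorization_mul (mul_ne_zero hm hn) hv, Nat.factorization_mul hm hn]
  simp only [Finsupp.coe_add, Pi.add_apply]
  have hor : m.factorization p = 0 ∨ n.factorization p = 0 := by
    by_contra hc
    push_neg at hc
    have h1 : p ∣ m := Nat.dvd_of_factorization_pos hc.1
    have h2 : p ∣ n := Nat.dvd_of_factorization_pos hc.2
    have hp1 : p = 1 := Nat.dvd_one.mp (hmn ▸ Nat.dvd_gcd h1 h2)
    subst hp1
    exact hc.1 (Nat.factorization_eq_zero_of_not_prime m Nat.not_prime_one)
  rcases hor with h | h <;> rw [h] <;> ring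

lemma fv_mult (v : ℕ) (hv : v ≠ 0) : (fv v).IsMultiplicative := by
  constructor
  · rw [fv_apply, one_mul, div_self (dcast_ne v hv)]
  · intro m n hmn
    rcases eq_or_ne m 0 with rfl | hm
    · have hn1 : n = 1 := Nat.coprime_zero_left n |>.mp hmn
      subst hn1
      simp
    rcases eq_or_ne n 0 with rfl | hn
    · have hm1 : m = 1 := Nat.coprime_zero_right m |>.mp hmn
      subst hm1
      simp
    have key : (((m * v).divisors.card : ℕ) : ℂ) * ((n * v).divisors.card : ℕ)
        = ((m * n * v).divisors.card : ℕ) * ((v.divisors.card : ℕ) : ℂ) := by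
      exact_mod_cast congrArg (Nat.cast : ℕ → ℂ) (d_mul_d v hv hm hn hmn)
    rw [fv_apply, fv_apply, fv_apply, div_mul_div_comm, div_eq_div_iff (dcast_ne v hv)
      (mul_ne_zero (dcast_ne v hv) (dcast_ne v hv))]
    linear_combination ((v.divisors.card : ℕ) : ℂ) * key.symm

/-- The convolution `c ⋆ σ₀`. -/
noncomputable def g (v : ℕ) : ArithmeticFunction ℂ :=
  c v * ((σ 0 : ArithmeticFunction ℕ) : ArithmeticFunction ℂ)

lemma g_mult (v : ℕ) : (g v).IsMultiplicative :=
  (c_mult v).mul isMultiplicative_sigma.natCast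

lemma card_divisors_prime_pow {p : ℕ} (hp : p.Prime) (k : ℕ) :
    (p ^ k).divisors.card = k + 1 := by
  rw [← ArithmeticFunction.sigma_zero_apply, sigma_zero_apply_prime_pow hp]

lemma fv_prime_pow (v : ℕ) (hv : v ≠ 0) {p : ℕ} (hp : p.Prime) (k : ℕ) :
    fv v (p ^ k)
      = ((k : ℂ) + (v.factorization p : ℂ) + 1) / ((v.factorization p : ℂ) + 1) := by
  set α := v.factorization p with hα
  set t := ordCompl[p] v with ht
  have ht0 : t ≠ 0 := (Nat.ordCompl_pos p hv).ne'
  have hco : Nat.Coprime (p ^ (k + α)) t :=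
    Nat.Coprime.pow_left _ (Nat.coprime_ordCompl hp hv)
  have hco2 : Nat.Coprime (p ^ α) t :=
    Nat.Coprime.pow_left _ (Nat.coprime_ordCompl hp hv)
  have h1 : p ^ k * v = p ^ (k + α) * t := by
    conv_lhs => rw [← Nat.ordProj_mul_ordCompl_eq_self v p]
    rw [pow_add]
    ring
  have h2 : v.divisors.card = (p ^ α * t).divisors.card := by
    conv_lhs => rw [← Nat.ordProj_mul_ordCompl_eq_self v p]
  rw [fv_apply, h1, hco.card_divisors_mul, card_divisors_prime_pow hp, h2,
    hco2.card_divisors_mul, card_divisors_prime_pow hp]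
  have hdt : ((t.divisors.card : ℕ) : ℂ) ≠ 0 := dcast_ne t ht0
  have hα0 : ((α : ℂ) + 1) ≠ 0 := Nat.cast_add_one_ne_zero α
  push_cast
  field_simp

lemma sigma_cast_prime_pow {p : ℕ} (hp : p.Prime) (i : ℕ) :
    (((σ 0 : ArithmeticFunction ℕ) : ArithmeticFunction ℂ)) (p ^ i) = (i : ℂ) + 1 := by
  rw [natCoe_apply, sigma_zero_apply_prime_pow hp]
  push_cast
  ring

lemma g_prime_pow (v : ℕ) {p : ℕ} (hp : p.Prime) (k : ℕ) :
    g v (p ^ k) = ((k : ℂ) + 1) - (k : ℂ) * w v p := by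
  rcases Nat.eq_zero_or_pos k with rfl | hk
  · simpa using (g_mult v).map_one
  obtain ⟨k', rfl⟩ : ∃ k', k = k' + 1 := ⟨k - 1, by omega⟩
  rw [g, mul_apply,
    Nat.sum_divisorsAntidiagonal
      (f := fun a b => c v a * (((σ 0 : ArithmeticFunction ℕ) : ArithmeticFunction ℂ)) b),
    Nat.sum_divisors_prime_pow hp]
  have hstep : ∀ i ∈ Finset.range (k' + 1 + 1),
      c v (p ^ i) * (((σ 0 : ArithmeticFunction ℕ) : ArithmeticFunction ℂ)) (p ^ (k' + 1) / p ^ i)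
        = c v (p ^ i) * (((k' + 1 - i : ℕ) : ℂ) + 1) := by
    intro i hi
    rw [Finset.mem_range] at hi
    rw [Nat.pow_div (by omega) hp.pos, sigma_cast_prime_pow hp]
  rw [Finset.sum_congr rfl hstep, Finset.sum_range_succ', Finset.sum_range_succ']
  have hzero : ∀ i ∈ Finset.range k',
      c v (p ^ (i + 1 + 1)) * (((k' + 1 - (i + 1 + 1) : ℕ) : ℂ) + 1) = 0 := by
    intro i _
    rw [c_apply_prime_pow v hp (by omega), zero_mul]
  rw [Finset.sum_congr rfl hzero, Finset.sum_const_zero, zero_add, pow_one, pow_zero,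
    c_one, c_apply_prime v hp]
  have h1 : k' + 1 - 1 = k' := by omega
  have h2 : k' + 1 - 0 = k' + 1 := by omega
  rw [h1, h2]
  push_cast
  ring

lemma fv_eq_g (v : ℕ) (hv : v ≠ 0) : fv v = g v := by
  refine (ArithmeticFunction.IsMultiplicative.eq_iff_eq_on_prime_powers (fv v) (fv_mult v hv) (g v) (g_mult v)).mpr ?_
  intro p i hp
  rw [fv_prime_pow v hv hp i, g_prime_pow v hp i, w]
  have hα0 : ((v.factorization p : ℂ) + 1) ≠ 0 := Nat.cast_add_one_ne_zero _
  field_simp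
  ring

/-- The exponential weight `n ↦ n^{-s}` as an arithmetic function. -/
noncomputable def ew (s : ℂ) : ArithmeticFunction ℂ :=
  ⟨fun n => if n = 0 then 0 else (n : ℂ) ^ (-s), rfl⟩

lemma ew_apply {s : ℂ} {n : ℕ} (hn : n ≠ 0) : ew s n = (n : ℂ) ^ (-s) := if_neg hn

lemma ew_mult (s : ℂ) : (ew s).IsMultiplicative := by
  constructor
  · rw [ew_apply one_ne_zero]
    simp
  · intro m n _
    rcases eq_or_ne m 0 with rfl | hm
    · simp [ew]
    rcases eq_or_ne n 0 with rfl | hn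
    · simp [ew]
    rw [ew_apply (mul_ne_zero hm hn), ew_apply hm, ew_apply hn, Nat.cast_mul,
      Complex.natCast_mul_natCast_cpow]

lemma LSeries_c (v : ℕ) (hv : v ≠ 0) (s : ℂ) :
    LSeries (c v ·) s
      = ∏ p ∈ v.primeFactors,
          (1 - (v.factorization p : ℂ) /
              (((v.factorization p : ℂ) + 1) * (p : ℂ) ^ s)) := by
  have hterm : ∀ n, n ∉ v.divisors → LSeries.term (c v ·) s n = 0 := by
    intro n hn
    rcases eq_or_ne n 0 with rfl | hn0
    · exact LSeries.term_zero _ _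
    · rw [LSeries.term_of_ne_zero hn0, c_eq_zero_of_not_mem_divisors v hv hn, zero_div]
  have h1 : LSeries (c v ·) s = ∑ n ∈ v.divisors, LSeries.term (c v ·) s n :=
    tsum_eq_sum hterm
  have h2 : ∀ n ∈ v.divisors, LSeries.term (c v ·) s n = pmul (c v) (ew s) n := by
    intro n hn
    have hn0 : n ≠ 0 := (Nat.pos_of_mem_divisors hn).ne'
    rw [LSeries.term_of_ne_zero hn0, pmul_apply, ew_apply hn0, Complex.cpow_neg,
      div_eq_mul_inv]
  have h3 : LSeries (c v ·) s = ((pmul (c v) (ew s)) * ζ) v := by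
    rw [coe_mul_zeta_apply, h1, Finset.sum_congr rfl h2]
  have hmult : ((pmul (c v) (ew s)) * (ζ : ArithmeticFunction ℂ)).IsMultiplicative :=
    ((c_mult v).pmul (ew_mult s)).mul isMultiplicative_zeta.natCast
  rw [h3, hmult.multiplicative_factorization _ hv, Finsupp.prod]
  rw [Nat.support_factorization]
  refine Finset.prod_congr rfl fun p hp => ?_
  have hpp : p.Prime := Nat.prime_of_mem_primeFactors hp
  have hα : v.factorization p ≠ 0 := by
    rw [← Finsupp.mem_support_iff, Nat.support_factorization]
    exact hp
  obtain ⟨α', hα'⟩ : ∃ α', v.factorization p = α' + 1 :=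
    ⟨v.factorization p - 1, by omega⟩
  rw [hα']
  rw [coe_mul_zeta_apply, Nat.sum_divisors_prime_pow hpp, Finset.sum_range_succ',
    Finset.sum_range_succ']
  have hzero : ∀ i ∈ Finset.range α', pmul (c v) (ew s) (p ^ (i + 1 + 1)) = 0 := by
    intro i _
    rw [pmul_apply, c_apply_prime_pow v hpp (by omega), zero_mul]
  rw [Finset.sum_congr rfl hzero, Finset.sum_const_zero, zero_add, pow_one, pow_zero,
    pmul_apply, pmul_apply, c_one, ew_apply one_ne_zero, ew_apply hpp.ne_zero,
    c_apply_prime v hpp, w, hα']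
  have hps : (p : ℂ) ^ s ≠ 0 := by
    rw [Ne, Complex.cpow_eq_zero_iff, not_and_or, not_not]
    exact Or.inl (Nat.cast_ne_zero.mpr hpp.ne_zero)
  have hα0 : ((α' : ℂ) + 1 + 1) ≠ 0 := by
    have := Nat.cast_add_one_ne_zero (R := ℂ) (α' + 1)
    push_cast at this ⊢
    exact this
  rw [Complex.cpow_neg]
  push_cast [Complex.one_cpow]
  field_simp
  ring

end DivisorShiftedAux

open DivisorShiftedAux ArithmeticFunction Complex
open scoped ArithmeticFunction.Moebius ArithmeticFunction.sigma ArithmeticFunction.zeta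
open scoped LSeries.notation

/-- For the divisor function `d` and `Re s > 1`,
`∑_{m ≥ 1} d(mv)/m^s = ζ(s)² d(v) B_v(s)` where
`B_v(s) = ∏_{p^α ∥ v} (1 - α/((α+1) p^s))`. -/
theorem divisor_shifted_lseries (v : ℕ) (hv : 1 ≤ v) (s : ℂ) (hs : 1 < s.re) :
    LSeries (fun m => ((m * v).divisors.card : ℂ)) s =
      riemannZeta s ^ 2 * (v.divisors.card : ℂ) *
        ∏ p ∈ v.primeFactors,
          (1 - (v.factorization p : ℂ) /
              (((v.factorization p : ℂ) + 1) * (p : ℂ) ^ s)) := by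
  have hv0 : v ≠ 0 := by omega
  have hζ : LSeriesSummable ↗ζ s := LSeriesSummable_zeta_iff.mpr hs
  have hζfun : ↗((ζ : ArithmeticFunction ℕ) : ArithmeticFunction ℂ) = ↗ζ :=
    funext fun n => natCoe_apply
  have hζ' : LSeriesSummable ↗((ζ : ArithmeticFunction ℕ) : ArithmeticFunction ℂ) s := by
    rw [hζfun]; exact hζ
  have hσζ : ((σ 0 : ArithmeticFunction ℕ) : ArithmeticFunction ℂ)
      = ((ζ : ArithmeticFunction ℕ) : ArithmeticFunction ℂ)
        * ((ζ : ArithmeticFunction ℕ) : ArithmeticFunction ℂ) := by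
    rw [← natCoe_mul]
    congr 1
    rw [← zeta_mul_pow_eq_sigma, pow_zero_eq_zeta]
  have hσsum : LSeriesSummable ↗((σ 0 : ArithmeticFunction ℕ) : ArithmeticFunction ℂ) s := by
    rw [hσζ]; exact LSeriesSummable_mul hζ' hζ'
  have hσval : LSeries ↗((σ 0 : ArithmeticFunction ℕ) : ArithmeticFunction ℂ) s
      = riemannZeta s ^ 2 := by
    rw [hσζ, LSeries_mul' hζ', hζfun, LSeries_zeta_eq_riemannZeta hs, sq]
    exact hζ'
  have hcsum : LSeriesSummable (c v ·) s := by
    refine summable_of_ne_finset_zero (s := v.divisors) fun n hn => ?_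
    rcases eq_or_ne n 0 with rfl | hn0
    · exact LSeries.term_zero _ _
    · rw [LSeries.term_of_ne_zero hn0, c_eq_zero_of_not_mem_divisors v hv0 hn, zero_div]
  have hgsum : LSeriesSummable ↗(g v) s := LSeriesSummable_mul hcsum hσsum
  have hcongr : ∀ {n : ℕ}, n ≠ 0 →
      ((n * v).divisors.card : ℂ) = ((v.divisors.card : ℂ) • ↗(g v)) n := by
    intro n hn
    have h := congrArg (fun F : ArithmeticFunction ℂ => F n) (fv_eq_g v hv0)
    simp only [fv_apply] at h
    rw [Pi.smul_apply, smul_eq_mul, ← h, mul_div_cancel₀ _ (dcast_ne v hv0)]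
  have hgval : LSeries ↗(g v) s
      = LSeries (c v ·) s
        * LSeries ↗((σ 0 : ArithmeticFunction ℕ) : ArithmeticFunction ℂ) s := by
    rw [show g v = c v * ((σ 0 : ArithmeticFunction ℕ) : ArithmeticFunction ℂ) from rfl]
    exact LSeries_mul' hcsum hσsum
  rw [LSeries_congr hcongr s, LSeries_smul, hgval, hσval, LSeries_c v hv0 s]
  ring
end

section
/- For each prime p and integer j ≥ 0, ∑_{i=0}^{j} (i+1)(j-i+1) B_{p^{j-i},p^i}(1) = (j+1) + j(j+1)·(1-1/p)/(1+1/p) + ((j-1)j(j+1)/6)·(1-1/p)²/(1+1/p), where B_{p^α,p^β}(1) = 1 - ((3αβ+2α+2β)p - αβ)/((α+1)(β+1)p(p+1)). -/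
open Finset

lemma sum_range_cast (j : ℕ) :
    (∑ i ∈ Finset.range (j + 1), (i : ℝ)) = j * (j + 1) / 2 := by
  induction j with
  | zero => simp
  | succ n ih => rw [Finset.sum_range_succ, ih]; push_cast; ring

lemma sum_range_sq_cast (j : ℕ) :
    (∑ i ∈ Finset.range (j + 1), (i : ℝ) ^ 2) = j * (j + 1) * (2 * j + 1) / 6 := by
  induction j with
  | zero => simp
  | succ n ih => rw [Finset.sum_range_succ, ih]; push_cast; ring

/-- For each prime `p` and integer `j ≥ 0`,
`∑_{i=0}^{j} (i+1)(j-i+1) B_{p^{j-i}, p^i}(1)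
  = (j+1) + j(j+1)(1-1/p)/(1+1/p) + ((j-1)j(j+1)/6)(1-1/p)²/(1+1/p)`,
where `B_{p^α, p^β}(1) = 1 - ((3αβ+2α+2β)p - αβ)/((α+1)(β+1)p(p+1))`. -/
theorem local_divisor_correlation_sum (p : ℕ) (hp : p.Prime) (j : ℕ) :
    (∑ i ∈ Finset.range (j + 1),
        ((i : ℝ) + 1) * ((j : ℝ) - i + 1) *
          (1 - ((3 * ((j : ℝ) - i) * i + 2 * ((j : ℝ) - i) + 2 * i) * p
                - ((j : ℝ) - i) * i) /
              ((((j : ℝ) - i) + 1) * ((i : ℝ) + 1) * p * ((p : ℝ) + 1)))) =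
      ((j : ℝ) + 1) + j * ((j : ℝ) + 1) * (1 - 1 / (p : ℝ)) / (1 + 1 / (p : ℝ))
        + (((j : ℝ) - 1) * j * ((j : ℝ) + 1) / 6) * (1 - 1 / (p : ℝ)) ^ 2
            / (1 + 1 / (p : ℝ)) := by
  have hp0 : (0 : ℝ) < p := by exact_mod_cast hp.pos
  have hp1 : (0 : ℝ) < (p : ℝ) + 1 := by linarith
  have key : (∑ i ∈ Finset.range (j + 1),
        ((i : ℝ) + 1) * ((j : ℝ) - i + 1) *
          (1 - ((3 * ((j : ℝ) - i) * i + 2 * ((j : ℝ) - i) + 2 * i) * p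
                - ((j : ℝ) - i) * i) /
              ((((j : ℝ) - i) + 1) * ((i : ℝ) + 1) * p * ((p : ℝ) + 1)))) =
      ∑ i ∈ Finset.range (j + 1),
        (((j : ℝ) + 1 - 2 * j / ((p : ℝ) + 1))
          + ((j : ℝ) - (3 * j * p - j) / (p * ((p : ℝ) + 1))) * i
          + (-1 - (1 - 3 * (p : ℝ)) / (p * ((p : ℝ) + 1))) * i ^ 2) := by
    refine Finset.sum_congr rfl fun i hi => ?_
    have hij : (i : ℝ) ≤ j := by
      have := Finset.mem_range.mp hi
      exact_mod_cast Nat.lt_succ_iff.mp this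
    have h1 : ((j : ℝ) - i + 1) ≠ 0 := by linarith
    have h2 : ((i : ℝ) + 1) ≠ 0 := by positivity
    field_simp
    ring
  rw [key]
  simp only [Finset.sum_add_distrib, Finset.sum_const, Finset.card_range,
    ← Finset.mul_sum, sum_range_cast, sum_range_sq_cast]
  have h3 : (p : ℝ) ≠ 0 := ne_of_gt hp0
  have h4 : ((p : ℝ) + 1) ≠ 0 := ne_of_gt hp1
  rw [nsmul_eq_mul, Nat.cast_add, Nat.cast_one]
  field_simp
  ring
end
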